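/- (Weighted Sobolev embedding) For every k ≥ 0 there exists a constant C = C(k) > 0 such that for every continuously differentiable function u : ℝ → ℝ with ‖u‖_{L²_k} < ∞ and ‖u'‖_{L²_k} < ∞, one has sup_{x∈ℝ} (x²+1)^{k/2} |u(x)| ≤ C (‖u‖_{L²_k} + ‖u'‖_{L²_k}). -/

import Mathlib

open MeasureTheory

/-- Weighted Sobolev embedding: for `k ≥ 0` there is `C > 0` such that every `C¹`
function `u : ℝ → ℝ` with finite weighted `L²_k` norms of `u` and `u'` satisfies
`(x²+1)^{k/2}|u(x)| ≤ C(‖u‖_{L²_k} + ‖u'‖_{L²_k})` for all `x`. -/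
theorem stmt_18 (k : ℝ) (hk : 0 ≤ k) :
    ∃ C : ℝ, 0 < C ∧ ∀ u : ℝ → ℝ, ContDiff ℝ 1 u →
      MeasureTheory.Integrable (fun x : ℝ => (x ^ 2 + 1) ^ k * u x ^ 2) →
      MeasureTheory.Integrable (fun x : ℝ => (x ^ 2 + 1) ^ k * deriv u x ^ 2) →
      ∀ x : ℝ, (x ^ 2 + 1) ^ (k / 2) * |u x| ≤
        C * (Real.sqrt (∫ y : ℝ, (y ^ 2 + 1) ^ k * u y ^ 2) +
             Real.sqrt (∫ y : ℝ, (y ^ 2 + 1) ^ k * deriv u y ^ 2)) := by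
  refine ⟨Real.sqrt (2 * k + 2), Real.sqrt_pos.mpr (by linarith), ?_⟩
  intro u hu hI0 hI1 x
  have hpos : ∀ y : ℝ, (0 : ℝ) < y ^ 2 + 1 := fun y => by positivity
  set f0 : ℝ → ℝ := fun y => (y ^ 2 + 1) ^ k * u y ^ 2 with hf0
  set f1 : ℝ → ℝ := fun y => (y ^ 2 + 1) ^ k * deriv u y ^ 2 with hf1
  have hf0nn : ∀ y, 0 ≤ f0 y := fun y => by
    simp only [hf0]; positivity
  have hf1nn : ∀ y, 0 ≤ f1 y := fun y => by
    simp only [hf1]; positivity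
  set a : ℝ := Real.sqrt (∫ y : ℝ, f0 y) with ha
  set b : ℝ := Real.sqrt (∫ y : ℝ, f1 y) with hb
  have hann : 0 ≤ a := Real.sqrt_nonneg _
  have hbnn : 0 ≤ b := Real.sqrt_nonneg _
  have hI0nn : 0 ≤ ∫ y : ℝ, f0 y := integral_nonneg hf0nn
  have hI1nn : 0 ≤ ∫ y : ℝ, f1 y := integral_nonneg hf1nn
  have ha2 : a ^ 2 = ∫ y : ℝ, f0 y := Real.sq_sqrt hI0nn
  have hb2 : b ^ 2 = ∫ y : ℝ, f1 y := Real.sq_sqrt hI1nn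
  -- derivative of w := f0
  set g : ℝ → ℝ := fun y =>
    k * (2 * y) * (y ^ 2 + 1) ^ (k - 1) * u y ^ 2
      + (y ^ 2 + 1) ^ k * (2 * u y ^ 1 * deriv u y) with hg
  have hud : Differentiable ℝ u := hu.differentiable one_ne_zero
  have hderiv : ∀ y : ℝ, HasDerivAt f0 (g y) y := by
    intro y
    have hb1 : HasDerivAt (fun y : ℝ => y ^ 2 + 1) (2 * y) y := by
      simpa using ((hasDerivAt_pow 2 y).add_const 1)
    have h1 : HasDerivAt (fun y : ℝ => (y ^ 2 + 1) ^ k)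
        (2 * y * k * (y ^ 2 + 1) ^ (k - 1)) y :=
      hb1.rpow_const (Or.inl (ne_of_gt (hpos y)))
    have h2 : HasDerivAt (fun y : ℝ => u y ^ 2) (2 * u y ^ 1 * deriv u y) y := by
      simpa using ((hud y).hasDerivAt.fun_pow 2)
    have := h1.fun_mul h2
    simpa [hg, hf0] using this.congr_deriv (by ring)
  have hdercont : Continuous (deriv u) := hu.continuous_deriv le_rfl
  have hgcont : Continuous g := by
    have hc : Continuous fun y : ℝ => y ^ 2 + 1 := by continuity
    have hck : ∀ p : ℝ, Continuous fun y : ℝ => (y ^ 2 + 1) ^ p := fun p =>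
      hc.rpow_const (fun y => Or.inl (ne_of_gt (hpos y)))
    exact (((continuous_const.mul (continuous_const.mul continuous_id)).mul
      (hck (k - 1))).mul ((hu.continuous).pow 2)).add
      ((hck k).mul ((continuous_const.mul ((hu.continuous).pow 1)).mul hdercont))
  -- pointwise bound on |g|
  have hgbound : ∀ y : ℝ, |g y| ≤ (2 * k + 1) * f0 y + f1 y := by
    intro y
    have hxle : |y| ≤ y ^ 2 + 1 := by
      nlinarith [abs_nonneg y, sq_abs y]
    have hrpow : (y ^ 2 + 1) * (y ^ 2 + 1) ^ (k - 1) = (y ^ 2 + 1) ^ k := by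
      calc (y ^ 2 + 1) * (y ^ 2 + 1) ^ (k - 1)
          = (y ^ 2 + 1) ^ (1 : ℝ) * (y ^ 2 + 1) ^ (k - 1) := by rw [Real.rpow_one]
        _ = (y ^ 2 + 1) ^ (1 + (k - 1)) := (Real.rpow_add (hpos y) _ _).symm
        _ = (y ^ 2 + 1) ^ k := by norm_num
    have h1 : |k * (2 * y) * (y ^ 2 + 1) ^ (k - 1) * u y ^ 2| ≤ 2 * k * f0 y := by
      have : |k * (2 * y) * (y ^ 2 + 1) ^ (k - 1) * u y ^ 2|
          = 2 * k * |y| * (y ^ 2 + 1) ^ (k - 1) * u y ^ 2 := by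
        rw [abs_mul, abs_mul, abs_mul]
        rw [abs_of_nonneg (Real.rpow_nonneg (le_of_lt (hpos y)) _),
          abs_of_nonneg (sq_nonneg (u y)), abs_mul, abs_of_nonneg hk,
          abs_of_nonneg (by norm_num : (0:ℝ) ≤ 2)]
        ring
      rw [this, show f0 y = (y ^ 2 + 1) ^ k * u y ^ 2 from rfl]
      have h2 : 2 * k * |y| * (y ^ 2 + 1) ^ (k - 1)
          ≤ 2 * k * ((y ^ 2 + 1) * (y ^ 2 + 1) ^ (k - 1)) := by
        have hnn := Real.rpow_nonneg (le_of_lt (hpos y)) (k - 1)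
        nlinarith [mul_nonneg (mul_nonneg hk (sub_nonneg.mpr hxle)) hnn]
      rw [hrpow] at h2
      nlinarith [mul_le_mul_of_nonneg_right h2 (sq_nonneg (u y))]
    have h2 : |(y ^ 2 + 1) ^ k * (2 * u y ^ 1 * deriv u y)| ≤ f0 y + f1 y := by
      have hpk := Real.rpow_nonneg (le_of_lt (hpos y)) k
      have : |(y ^ 2 + 1) ^ k * (2 * u y ^ 1 * deriv u y)|
          = (y ^ 2 + 1) ^ k * (2 * |u y| * |deriv u y|) := by
        rw [abs_mul, abs_of_nonneg hpk, abs_mul, abs_mul,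
          abs_of_nonneg (by norm_num : (0:ℝ) ≤ 2)]
        simp [pow_one]
      rw [this, show f0 y = (y ^ 2 + 1) ^ k * u y ^ 2 from rfl,
        show f1 y = (y ^ 2 + 1) ^ k * deriv u y ^ 2 from rfl]
      have h3 : 2 * |u y| * |deriv u y| ≤ u y ^ 2 + deriv u y ^ 2 := by
        nlinarith [sq_nonneg (|u y| - |deriv u y|), sq_abs (u y), sq_abs (deriv u y)]
      nlinarith [mul_le_mul_of_nonneg_left h3 hpk]
    calc |g y| ≤ |k * (2 * y) * (y ^ 2 + 1) ^ (k - 1) * u y ^ 2|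
          + |(y ^ 2 + 1) ^ k * (2 * u y ^ 1 * deriv u y)| := abs_add_le _ _
      _ ≤ 2 * k * f0 y + (f0 y + f1 y) := add_le_add h1 h2
      _ = (2 * k + 1) * f0 y + f1 y := by ring
  have hdom : Integrable (fun y : ℝ => (2 * k + 1) * f0 y + f1 y) :=
    (hI0.const_mul (2 * k + 1)).add hI1
  have hgint : Integrable g :=
    hdom.mono' hgcont.aestronglyMeasurable
      (Filter.Eventually.of_forall fun y => by
        simpa [Real.norm_eq_abs] using hgbound y)
  set A : ℝ := ∫ y : ℝ, |g y| with hA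
  -- FTC step
  have hstep : ∀ y ∈ Set.Icc x (x + 1), f0 x ≤ f0 y + A := by
    intro y hy
    have hxy : x ≤ y := hy.1
    have hftc : ∫ t in x..y, g t = f0 y - f0 x :=
      intervalIntegral.integral_eq_sub_of_hasDerivAt
        (fun t _ => hderiv t) hgint.intervalIntegrable
    have h1 : |∫ t in x..y, g t| ≤ ∫ t in x..y, |g t| :=
      intervalIntegral.abs_integral_le_integral_abs hxy
    have h2 : (∫ t in x..y, |g t|) ≤ A := by
      rw [intervalIntegral.integral_of_le hxy]
      exact setIntegral_le_integral hgint.abs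
        (Filter.Eventually.of_forall fun t => abs_nonneg _)
    have : f0 x = f0 y - ∫ t in x..y, g t := by rw [hftc]; ring
    rw [this]
    have := neg_abs_le (∫ t in x..y, g t)
    linarith
  -- averaging step
  have havg : f0 x ≤ (∫ y : ℝ, f0 y) + A := by
    have hle : x ≤ x + 1 := by linarith
    have hconst : f0 x = ∫ y in x..(x + 1), f0 x := by simp
    have hint1 : IntervalIntegrable (fun y => f0 y + A) volume x (x + 1) :=
      hI0.intervalIntegrable.add (intervalIntegrable_const)
    have hmono : (∫ y in x..(x + 1), f0 x) ≤ ∫ y in x..(x + 1), (f0 y + A) :=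
      intervalIntegral.integral_mono_on hle intervalIntegrable_const hint1 hstep
    have heq : (∫ y in x..(x + 1), (f0 y + A)) = (∫ y in x..(x + 1), f0 y) + A := by
      rw [intervalIntegral.integral_add hI0.intervalIntegrable
        intervalIntegrable_const]
      simp
    have hle2 : (∫ y in x..(x + 1), f0 y) ≤ ∫ y : ℝ, f0 y := by
      rw [intervalIntegral.integral_of_le hle]
      exact setIntegral_le_integral hI0
        (Filter.Eventually.of_forall fun t => hf0nn t)
    calc f0 x = ∫ y in x..(x + 1), f0 x := hconst
      _ ≤ (∫ y in x..(x + 1), f0 y) + A := by rw [← heq]; exact hmono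
      _ ≤ (∫ y : ℝ, f0 y) + A := by linarith
  have hAle : A ≤ (2 * k + 1) * (∫ y : ℝ, f0 y) + ∫ y : ℝ, f1 y := by
    have : A ≤ ∫ y : ℝ, ((2 * k + 1) * f0 y + f1 y) :=
      integral_mono hgint.abs hdom hgbound
    rwa [integral_add (hI0.const_mul _) hI1, integral_const_mul] at this
  have hkey : f0 x ≤ (2 * k + 2) * (a + b) ^ 2 := by
    have h1 : f0 x ≤ (2 * k + 2) * a ^ 2 + b ^ 2 := by
      rw [ha2, hb2]; linarith
    nlinarith [mul_nonneg hann hbnn]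
  -- conclude
  have hsqrt : Real.sqrt (f0 x) = (x ^ 2 + 1) ^ (k / 2) * |u x| := by
    rw [hf0]
    rw [Real.sqrt_mul (Real.rpow_nonneg (le_of_lt (hpos x)) k)]
    rw [Real.sqrt_sq_eq_abs]
    congr 1
    rw [Real.sqrt_eq_rpow, ← Real.rpow_mul (hpos x).le, mul_one_div]
  calc (x ^ 2 + 1) ^ (k / 2) * |u x| = Real.sqrt (f0 x) := hsqrt.symm
    _ ≤ Real.sqrt ((2 * k + 2) * (a + b) ^ 2) := Real.sqrt_le_sqrt hkey
    _ = Real.sqrt (2 * k + 2) * (a + b) := by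
        rw [Real.sqrt_mul (by linarith), Real.sqrt_sq (by linarith)]
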